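/- Let g be a finite-dimensional reductive complex Lie algebra and k an ideal of g. Then every simple admissible (g,k)-module M is finite-dimensional. (A (g,k)-module is a g-module with locally finite k-action; it is admissible if its restriction to k is a direct sum of simple finite-dimensional k-modules, each occurring with finite multiplicity.) -/

import Mathlib

/-- Let `g` be a finite-dimensional reductive complex Lie algebra (every ideal has a
complementary ideal) and `k` an ideal of `g`.  Then every simple admissible
`(g,k)`-module `M` is finite-dimensional.  Here `M` is a `(g,k)`-module if `k` acts
locally finitely on `M`; it is admissible if, as a `k`-module, it is a direct sum of
simple finite-dimensional `k`-modules (the sum of all such submodules is everything)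
with finite multiplicities (every isotypic component is finite-dimensional). -/
theorem simple_admissible_module_over_ideal_is_finite_dimensional
    (L : Type*) [LieRing L] [LieAlgebra ℂ L] [FiniteDimensional ℂ L]
    (hred : ∀ I : LieIdeal ℂ L, ∃ J : LieIdeal ℂ L, IsCompl I J)
    (k : LieIdeal ℂ L)
    (M : Type*) [AddCommGroup M] [Module ℂ M] [LieRingModule L M] [LieModule ℂ L M]
    [LieModule.IsIrreducible ℂ L M]
    (hlf : ∀ m : M, FiniteDimensional ℂ (LieSubmodule.lieSpan ℂ (↥k) {m}))
    (hss : sSup {N : LieSubmodule ℂ (↥k) M |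
        LieModule.IsIrreducible ℂ (↥k) (↥N) ∧ FiniteDimensional ℂ (↥N)} = ⊤)
    (hadm : ∀ Mk : LieSubmodule ℂ (↥k) M,
      LieModule.IsIrreducible ℂ (↥k) (↥Mk) → FiniteDimensional ℂ (↥Mk) →
      FiniteDimensional ℂ
        (↥(sSup {N : LieSubmodule ℂ (↥k) M | Nonempty ((↥N) ≃ₗ⁅ℂ,↥k⁆ (↥Mk))}))) :
    FiniteDimensional ℂ M := by
  classical
  obtain ⟨J, hJ⟩ := hred k
  have hnt : Nontrivial M := LieModule.nontrivial_of_isIrreducible ℂ L M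
  -- k and J commute
  have hcomm : ∀ z ∈ J, ∀ y : ↥k, ⁅(y : L), z⁆ = 0 := by
    intro z hz y
    have h1 : ⁅(y : L), z⁆ ∈ k := by
      have h := k.neg_mem (k.lie_mem (x := z) y.2)
      rwa [lie_skew] at h
    have h2 : ⁅(y : L), z⁆ ∈ J := J.lie_mem hz
    have : ⁅(y : L), z⁆ ∈ k ⊓ J := ⟨h1, h2⟩
    rwa [hJ.inf_eq_bot, LieSubmodule.mem_bot] at this
  -- pick a simple finite-dimensional k-submodule
  obtain ⟨Mk, hMk1, hMk2⟩ : ∃ N : LieSubmodule ℂ (↥k) M,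
      LieModule.IsIrreducible ℂ (↥k) (↥N) ∧ FiniteDimensional ℂ (↥N) := by
    by_contra h
    push_neg at h
    have he : {N : LieSubmodule ℂ (↥k) M |
        LieModule.IsIrreducible ℂ (↥k) (↥N) ∧ FiniteDimensional ℂ (↥N)} = ∅ := by
      ext N; simp only [Set.mem_setOf_eq, Set.mem_empty_iff_false, iff_false]
      rintro ⟨h1, h2⟩; exact h N h1 h2
    rw [he, sSup_empty] at hss
    obtain ⟨x, y, hxy⟩ := hnt
    have hx : x ∈ (⊥ : LieSubmodule ℂ (↥k) M) := hss ▸ LieSubmodule.mem_top x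
    have hy : y ∈ (⊥ : LieSubmodule ℂ (↥k) M) := hss ▸ LieSubmodule.mem_top y
    rw [LieSubmodule.mem_bot] at hx hy
    exact hxy (hx.trans hy.symm)
  set 𝒮 : Set (LieSubmodule ℂ (↥k) M) :=
    {N : LieSubmodule ℂ (↥k) M | Nonempty ((↥N) ≃ₗ⁅ℂ,↥k⁆ (↥Mk))} with h𝒮
  have hfin : FiniteDimensional ℂ (↥(sSup 𝒮)) := hadm Mk hMk1 hMk2
  set S : LieSubmodule ℂ (↥k) M := sSup 𝒮 with hS
  -- stability of S under J
  have hstab : ∀ z ∈ J, ∀ m ∈ S, ⁅z, m⁆ ∈ S := by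
    intro z hz
    have key : ∀ N ∈ 𝒮, ∀ n ∈ N, ⁅z, n⁆ ∈ S := by
      intro N hN n hn
      obtain ⟨e⟩ := hN
      -- the Lie module map Mk → M, v ↦ ⁅z, e.symm v⁆
      let g : (↥Mk) →ₗ⁅ℂ,↥k⁆ M :=
        { toFun := fun v => ⁅z, ((e.symm v : ↥N) : M)⁆
          map_add' := by
            intro a b
            show ⁅z, ((e.symm (a + b) : ↥N) : M)⁆
              = ⁅z, ((e.symm a : ↥N) : M)⁆ + ⁅z, ((e.symm b : ↥N) : M)⁆
            have h : e.symm (a + b) = e.symm a + e.symm b := e.symm.toLieModuleHom.map_add a b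
            rw [h, LieSubmodule.coe_add, lie_add]
          map_smul' := by
            intro c a
            show ⁅z, ((e.symm (c • a) : ↥N) : M)⁆ = c • ⁅z, ((e.symm a : ↥N) : M)⁆
            have h : e.symm (c • a) = c • e.symm a := e.symm.toLieModuleHom.map_smul c a
            rw [h, LieSubmodule.coe_smul, lie_smul]
          map_lie' := by
            intro y v
            show ⁅z, ((e.symm ⁅y, v⁆ : ↥N) : M)⁆ = ⁅y, ⁅z, ((e.symm v : ↥N) : M)⁆⁆
            have h1 : ((e.symm ⁅y, v⁆ : ↥N) : M)
                = ⁅(y : L), ((e.symm v : ↥N) : M)⁆ := by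
              have h2 : (e.symm ⁅y, v⁆ : ↥N) = ⁅y, e.symm v⁆ :=
                e.symm.toLieModuleHom.map_lie y v
              rw [h2, LieSubmodule.coe_bracket, LieIdeal.coe_bracket_of_module]
            rw [h1, LieIdeal.coe_bracket_of_module]
            conv_rhs => rw [leibniz_lie]
            rw [hcomm z hz y, zero_lie, zero_add] }
      have hker : g.ker = ⊥ ∨ g.ker = ⊤ := hMk1.eq_bot_or_eq_top g.ker
      have hmem : ⁅z, (n : M)⁆ ∈ g.range := by
        refine ⟨e ⟨n, hn⟩, ?_⟩
        show ⁅z, ((e.symm (e ⟨n, hn⟩) : ↥N) : M)⁆ = ⁅z, n⁆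
        rw [e.symm_apply_apply]
      rcases hker with hker | hker
      · -- g injective, so its range is isomorphic to Mk and lies in S
        have hinj : Function.Injective g := g.ker_eq_bot.mp hker
        have hrange : g.range ∈ 𝒮 := by
          let g' := g.codRestrict g.range (fun m => ⟨m, rfl⟩)
          have hbij : Function.Bijective g' := by
            constructor
            · intro a b hab
              apply hinj
              have := congrArg (Subtype.val) hab
              exact this
            · rintro ⟨x, v, hv⟩
              exact ⟨v, Subtype.ext hv⟩
          let E : (↥Mk) ≃ₗ[ℂ] (↥g.range) := LinearEquiv.ofBijective g'.toLinearMap hbij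
          refine ⟨{ E.symm with
            map_lie' := ?_ }⟩
          intro y v
          apply E.injective
          show E (E.symm ⁅y, v⁆) = E ⁅y, E.symm v⁆
          rw [E.apply_symm_apply]
          have hE : ∀ w, E w = g' w := fun _ => rfl
          rw [hE, g'.map_lie, ← hE, E.apply_symm_apply]
        have hle : g.range ≤ S := le_sSup hrange
        obtain ⟨v, hv⟩ := hmem
        exact hle ⟨v, hv⟩
      · -- g = 0
        have : ∀ v, g v = 0 := by
          intro v
          have : v ∈ g.ker := by rw [hker]; exact LieSubmodule.mem_top v
          exact this
        obtain ⟨v, hv⟩ := hmem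
        rw [← hv]
        have h0 : g v = 0 := this v
        rw [h0]; exact S.zero_mem
    -- extend to all of S
    intro m hm
    let T : Submodule ℂ M := (S : Submodule ℂ M).comap (LieModule.toEnd ℂ L M z)
    have hST : (S : Submodule ℂ M) ≤ T := by
      rw [hS, LieSubmodule.sSup_toSubmodule]
      apply sSup_le
      rintro p ⟨N, hN, rfl⟩
      intro n hn
      exact key N hN n hn
    exact hST hm
  -- S is an L-submodule
  let S' : LieSubmodule ℂ L M :=
    { (S : Submodule ℂ M) with
      lie_mem := by
        intro x m hm
        have hx : x ∈ k ⊔ J := by rw [hJ.sup_eq_top]; exact LieSubmodule.mem_top x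
        rw [LieSubmodule.mem_sup] at hx
        obtain ⟨y, hy, z, hz, rfl⟩ := hx
        show ⁅y + z, m⁆ ∈ (S : Submodule ℂ M)
        rw [add_lie]
        refine Submodule.add_mem _ ?_ ?_
        · have := S.lie_mem (x := ⟨y, hy⟩) (m := m) hm
          rwa [LieIdeal.coe_bracket_of_module] at this
        · exact hstab z hz m hm }
  have hS'bot : S' ≠ ⊥ := by
    intro hbot
    have hMkS : Mk ≤ S := le_sSup ⟨LieModuleEquiv.refl⟩
    haveI := hMk1
    have : Nontrivial (↥Mk) := LieModule.nontrivial_of_isIrreducible ℂ (↥k) (↥Mk)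
    obtain ⟨⟨a, ha⟩, ⟨b, hb⟩, hab⟩ := this
    have ha' : a ∈ S' := hMkS ha
    have hb' : b ∈ S' := hMkS hb
    rw [hbot, LieSubmodule.mem_bot] at ha' hb'
    exact hab (Subtype.ext (ha'.trans hb'.symm))
  have hS'top : S' = ⊤ := (eq_bot_or_eq_top S').resolve_left hS'bot
  have : (S : Submodule ℂ M) = ⊤ := by
    have := congrArg (fun (N : LieSubmodule ℂ L M) => (N : Submodule ℂ M)) hS'top
    rw [LieSubmodule.top_toSubmodule] at this
    exact this
  have : FiniteDimensional ℂ (↥(⊤ : Submodule ℂ M)) := this ▸ hfin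
  exact (Submodule.topEquiv (R := ℂ) (M := M)).finiteDimensional
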